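/- Let Ṽ ∈ ℝ^{(m+p)×k}, U ∈ ℝ^{m×(k+1)}, B ∈ ℝ^{(k+1)×k}, F̃ ∈ ℝ^{m×k}, Û ∈ ℝ^{p×k}, B̂ ∈ ℝ^{k×k} invertible, F̄ ∈ ℝ^{p×k}, E ∈ ℝ^{k×k}, and let P = diag(1, −1, …, (−1)^{k−1}) ∈ ℝ^{k×k}. Assume: (i) the first m rows of Ṽ equal U B + F̃; (ii) (0_{p×m}, I_p) Ṽ P = Û B̂ + F̄ (i.e., the last p rows of Ṽ, multiplied on the right by P, equal Û B̂ + F̄); and (iii) Bᵀ B + P B̂ᵀ B̂ P = I_k + E. Set B̄ = B̂ P and E₃ = Bᵀ Uᵀ F̃ + B̄ᵀ Ûᵀ F̄ P + F̃ᵀ U B + P F̄ᵀ Û B̄ + F̃ᵀ F̃ + P F̄ᵀ F̄ P. Then I_k − Ûᵀ Û = B̄⁻ᵀ [ (I_k − Ṽᵀ Ṽ) − Bᵀ (I_{k+1} − Uᵀ U) B + E + E₃ ] B̄⁻¹, and consequently ‖I_k − Ûᵀ Û‖ ≤ ‖B̂⁻¹‖² ( ‖I_k − Ṽᵀ Ṽ‖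 + ‖B‖² ‖I_{k+1} − Uᵀ U‖ + ‖E‖ + ‖E₃‖ ). -/

import Mathlib

open Matrix

noncomputable def spec {α β : Type*} [Fintype α] [Fintype β] [DecidableEq β]
    (M : Matrix α β ℝ) : ℝ :=
  ‖LinearMap.toContinuousLinearMap (Matrix.toEuclideanLin M)‖

open scoped Matrix.Norms.L2Operator in
private lemma spec_eq {α β : Type*} [Fintype α] [Fintype β] [DecidableEq β]
    (M : Matrix α β ℝ) : spec M = ‖M‖ := rfl

open scoped Matrix.Norms.L2Operator in
private lemma spec_nonneg {α β : Type*} [Fintype α] [Fintype β] [DecidableEq β]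
    (M : Matrix α β ℝ) : 0 ≤ spec M := by rw [spec_eq]; exact norm_nonneg M

open scoped Matrix.Norms.L2Operator in
private lemma spec_mul_le {α β γ : Type*} [Fintype α] [Fintype β] [Fintype γ]
    [DecidableEq β] [DecidableEq γ] (A : Matrix α β ℝ) (B : Matrix β γ ℝ) :
    spec (A * B) ≤ spec A * spec B := by
  simpa only [spec_eq] using Matrix.l2_opNorm_mul A B

open scoped Matrix.Norms.L2Operator in
private lemma spec_transpose {α β : Type*} [Fintype α] [Fintype β] [DecidableEq α] [DecidableEq β]
    (A : Matrix α β ℝ) : spec Aᵀ = spec A := by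
  have h : Aᴴ = Aᵀ := by ext i j; simp [Matrix.conjTranspose_apply]
  simpa only [spec_eq, h] using Matrix.l2_opNorm_conjTranspose A

open scoped Matrix.Norms.L2Operator in
private lemma spec_sub_le {α β : Type*} [Fintype α] [Fintype β] [DecidableEq β]
    (A B : Matrix α β ℝ) : spec (A - B) ≤ spec A + spec B := by
  simpa only [spec_eq] using norm_sub_le A B

open scoped Matrix.Norms.L2Operator in
private lemma spec_add_le {α β : Type*} [Fintype α] [Fintype β] [DecidableEq β]
    (A B : Matrix α β ℝ) : spec (A + B) ≤ spec A + spec B := by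
  simpa only [spec_eq] using norm_add_le A B

open scoped Matrix.Norms.L2Operator in
private lemma spec_one_le {α : Type*} [Fintype α] [DecidableEq α] :
    spec (1 : Matrix α α ℝ) ≤ 1 := by
  rw [spec_eq, Matrix.cstar_norm_def, _root_.map_one]
  rw [ContinuousLinearMap.one_def]
  exact ContinuousLinearMap.norm_id_le

open scoped Matrix.Norms.L2Operator in
private lemma spec_tmul_self {α β : Type*} [Fintype α] [Fintype β] [DecidableEq α] [DecidableEq β]
    (A : Matrix α β ℝ) : spec (Aᵀ * A) = spec A * spec A := by
  have h : Aᴴ = Aᵀ := by ext i j; simp [Matrix.conjTranspose_apply]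
  simpa only [spec_eq, h] using Matrix.l2_opNorm_conjTranspose_mul_self A

/-- Theorem 3.4: the orthogonality level `‖I − Ûᵀ Û‖` of the computed Lanczos
vectors `Û` is bounded in terms of the orthogonality levels of `U` and `Ṽ` and
the quantity `‖B̂⁻¹‖`. -/
theorem stmt10 {m p k : ℕ}
    (Vt : Matrix (Fin m ⊕ Fin p) (Fin k) ℝ)
    (U : Matrix (Fin m) (Fin (k + 1)) ℝ)
    (B : Matrix (Fin (k + 1)) (Fin k) ℝ)
    (Ft : Matrix (Fin m) (Fin k) ℝ)
    (Uh : Matrix (Fin p) (Fin k) ℝ)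
    (Bh : Matrix (Fin k) (Fin k) ℝ) (hBh : IsUnit Bh.det)
    (Fb : Matrix (Fin p) (Fin k) ℝ)
    (E : Matrix (Fin k) (Fin k) ℝ)
    (P : Matrix (Fin k) (Fin k) ℝ)
    (hP : P = Matrix.diagonal fun i : Fin k => (-1 : ℝ) ^ (i : ℕ))
    (h1 : Vt.submatrix Sum.inl id = U * B + Ft)
    (h2 : Vt.submatrix Sum.inr id * P = Uh * Bh + Fb)
    (h3 : Bᵀ * B + P * Bhᵀ * Bh * P = 1 + E)
    (Bbar : Matrix (Fin k) (Fin k) ℝ) (hBbar : Bbar = Bh * P)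
    (E3 : Matrix (Fin k) (Fin k) ℝ)
    (hE3 : E3 = Bᵀ * Uᵀ * Ft + Bbarᵀ * Uhᵀ * Fb * P + Ftᵀ * U * B + P * Fbᵀ * Uh * Bbar
      + Ftᵀ * Ft + P * Fbᵀ * Fb * P) :
    1 - Uhᵀ * Uh
      = (Bbar⁻¹)ᵀ * ((1 - Vtᵀ * Vt) - Bᵀ * (1 - Uᵀ * U) * B + E + E3) * Bbar⁻¹ ∧
    spec (1 - Uhᵀ * Uh) ≤ spec Bh⁻¹ ^ 2 *
      (spec (1 - Vtᵀ * Vt) + spec B ^ 2 * spec (1 - Uᵀ * U) + spec E + spec E3) := by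
  -- basic facts about P
  have hPP : P * P = 1 := by
    subst hP
    rw [Matrix.diagonal_mul_diagonal]
    convert Matrix.diagonal_one
    rw [← pow_add]; simp [pow_mul_comm]
  have hPt : Pᵀ = P := by subst hP; exact Matrix.diagonal_transpose _
  have hPdet : IsUnit P.det := Matrix.isUnit_det_of_right_inverse hPP
  have hBbardet : IsUnit Bbar.det := by
    rw [hBbar, Matrix.det_mul]; exact hBh.mul hPdet
  -- the key algebraic identity
  have key : Bbarᵀ * (1 - Uhᵀ * Uh) * Bbar
      = (1 - Vtᵀ * Vt) - Bᵀ * (1 - Uᵀ * U) * B + E + E3 := by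
    have hsplit : Vtᵀ * Vt = (Vt.submatrix Sum.inl id)ᵀ * Vt.submatrix Sum.inl id
        + (Vt.submatrix Sum.inr id)ᵀ * Vt.submatrix Sum.inr id := by
      ext i j; simp [Matrix.mul_apply, Fintype.sum_sum_type]
    have hV2 : Vt.submatrix Sum.inr id = (Uh * Bh + Fb) * P := by
      have := congrArg (fun X => X * P) h2
      simpa only [Matrix.mul_assoc, hPP, Matrix.mul_one] using this
    have h3' : P * (Bhᵀ * (Bh * P)) = 1 + E - Bᵀ * B := by
      rw [← h3]; simp only [Matrix.mul_assoc]; abel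
    rw [hsplit, h1, hV2, hE3, hBbar]
    simp only [Matrix.transpose_mul, Matrix.transpose_add, hPt, Matrix.mul_add, Matrix.add_mul,
      Matrix.mul_sub, Matrix.sub_mul, Matrix.mul_one, Matrix.one_mul, Matrix.mul_assoc, h3']
    abel
  -- part 1
  have e2 : Bbar * Bbar⁻¹ = 1 := Matrix.mul_nonsing_inv _ hBbardet
  have e3 : Bbar⁻¹ * Bbar = 1 := Matrix.nonsing_inv_mul _ hBbardet
  have e1 : (Bbar⁻¹)ᵀ * Bbarᵀ = 1 := by
    rw [← Matrix.transpose_mul, e2, Matrix.transpose_one]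
  have part1 : 1 - Uhᵀ * Uh
      = (Bbar⁻¹)ᵀ * ((1 - Vtᵀ * Vt) - Bᵀ * (1 - Uᵀ * U) * B + E + E3) * Bbar⁻¹ := by
    rw [← key]
    have : (Bbar⁻¹)ᵀ * (Bbarᵀ * (1 - Uhᵀ * Uh) * Bbar) * Bbar⁻¹
        = ((Bbar⁻¹)ᵀ * Bbarᵀ) * (1 - Uhᵀ * Uh) * (Bbar * Bbar⁻¹) := by
      noncomm_ring
    rw [this, e1, e2, Matrix.one_mul, Matrix.mul_one]
  refine ⟨part1, ?_⟩
  -- part 2: the norm bound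
  set M := (1 - Vtᵀ * Vt) - Bᵀ * (1 - Uᵀ * U) * B + E + E3 with hM
  -- spec P ≤ 1
  have hPn : spec P ≤ 1 := by
    have h1' : spec (Pᵀ * P) = spec P * spec P := spec_tmul_self P
    rw [hPt, hPP] at h1'
    nlinarith [spec_nonneg P, spec_one_le (α := Fin k)]
  -- spec Bbar⁻¹ ≤ spec Bh⁻¹
  have hPinv : P⁻¹ = P := Matrix.inv_eq_left_inv hPP
  have hBbarinv : Bbar⁻¹ = P * Bh⁻¹ := by
    rw [hBbar, Matrix.mul_inv_rev, hPinv]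
  have hq : spec Bbar⁻¹ ≤ spec Bh⁻¹ := by
    rw [hBbarinv]
    calc spec (P * Bh⁻¹) ≤ spec P * spec Bh⁻¹ := spec_mul_le _ _
    _ ≤ 1 * spec Bh⁻¹ := mul_le_mul_of_nonneg_right hPn (spec_nonneg _)
    _ = spec Bh⁻¹ := one_mul _
  -- bound on spec M
  have hC : spec (Bᵀ * (1 - Uᵀ * U) * B) ≤ spec B ^ 2 * spec (1 - Uᵀ * U) := by
    calc spec (Bᵀ * (1 - Uᵀ * U) * B)
        ≤ spec (Bᵀ * (1 - Uᵀ * U)) * spec B := spec_mul_le _ _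
      _ ≤ (spec Bᵀ * spec (1 - Uᵀ * U)) * spec B :=
          mul_le_mul_of_nonneg_right (spec_mul_le _ _) (spec_nonneg _)
      _ = spec B ^ 2 * spec (1 - Uᵀ * U) := by rw [spec_transpose]; ring
  have hMle : spec M ≤ spec (1 - Vtᵀ * Vt) + spec B ^ 2 * spec (1 - Uᵀ * U)
      + spec E + spec E3 := by
    calc spec M ≤ spec ((1 - Vtᵀ * Vt) - Bᵀ * (1 - Uᵀ * U) * B + E) + spec E3 :=
          spec_add_le _ _
      _ ≤ (spec ((1 - Vtᵀ * Vt) - Bᵀ * (1 - Uᵀ * U) * B) + spec E) + spec E3 :=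
          add_le_add_left (spec_add_le _ _) _
      _ ≤ ((spec (1 - Vtᵀ * Vt) + spec (Bᵀ * (1 - Uᵀ * U) * B)) + spec E) + spec E3 :=
          add_le_add_left (add_le_add_left (spec_sub_le _ _) _) _
      _ ≤ spec (1 - Vtᵀ * Vt) + spec B ^ 2 * spec (1 - Uᵀ * U) + spec E + spec E3 := by
          have := hC; linarith
  -- combine
  calc spec (1 - Uhᵀ * Uh) = spec ((Bbar⁻¹)ᵀ * M * Bbar⁻¹) := by rw [part1]
    _ ≤ spec ((Bbar⁻¹)ᵀ * M) * spec Bbar⁻¹ := spec_mul_le _ _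
    _ ≤ (spec (Bbar⁻¹)ᵀ * spec M) * spec Bbar⁻¹ :=
        mul_le_mul_of_nonneg_right (spec_mul_le _ _) (spec_nonneg _)
    _ = spec Bbar⁻¹ ^ 2 * spec M := by rw [spec_transpose]; ring
    _ ≤ spec Bh⁻¹ ^ 2 *
        (spec (1 - Vtᵀ * Vt) + spec B ^ 2 * spec (1 - Uᵀ * U) + spec E + spec E3) := by
        apply mul_le_mul
        · exact pow_le_pow_left₀ (spec_nonneg _) hq 2
        · exact hMle
        · exact spec_nonneg _
        · positivity
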